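/- For every symmetric 2×2 matrix τ, every λ > 0, and every s ∈ (0,1], one has h_λ(sτ) ≤ C·s·h_λ(τ) for a universal constant C (one may take C = 2). -/

import Mathlib

noncomputable def frob {n : ℕ} (τ : Matrix (Fin n) (Fin n) ℝ) : ℝ :=
  Real.sqrt (∑ i, ∑ j, (τ i j) ^ 2)

/-- `ρ⁽²⁾(τ) = |τ₁| + |τ₂|`, the sum of absolute values of eigenvalues. -/
noncomputable def rho2 (τ : Matrix (Fin 2) (Fin 2) ℝ) : ℝ :=
  if h : τ.IsHermitian then |h.eigenvalues 0| + |h.eigenvalues 1| else 0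

/-- `H⁽²⁾(τ) = 2|τ₂|`, twice the largest absolute eigenvalue. -/
noncomputable def H2 (τ : Matrix (Fin 2) (Fin 2) ℝ) : ℝ :=
  if h : τ.IsHermitian then 2 * max |h.eigenvalues 0| |h.eigenvalues 1| else 0

/-- the quasiconvexified integrand `h_λ` for `n = 2`. -/
noncomputable def hlam (lam : ℝ) (τ : Matrix (Fin 2) (Fin 2) ℝ) : ℝ :=
  if Real.sqrt lam ≤ rho2 τ then (frob τ) ^ 2 / Real.sqrt lam + Real.sqrt lam
  else 2 * (rho2 τ - |τ.det| / Real.sqrt lam)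

open Matrix

lemma trace_eq_sum_eig (A : Matrix (Fin 2) (Fin 2) ℝ) (hA : A.IsHermitian) :
    A.trace = hA.eigenvalues 0 + hA.eigenvalues 1 := by
  have hunit : star (hA.eigenvectorUnitary : Matrix (Fin 2) (Fin 2) ℝ)
      * (hA.eigenvectorUnitary : Matrix (Fin 2) (Fin 2) ℝ) = 1 :=
    Matrix.mem_unitaryGroup_iff'.mp hA.eigenvectorUnitary.2
  conv_lhs => rw [hA.spectral_theorem, Unitary.conjStarAlgAut_apply]
  rw [Matrix.trace_mul_cycle, hunit, Matrix.one_mul]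
  simp [Matrix.trace_diagonal, Fin.sum_univ_two]

lemma det_eq_eig (A : Matrix (Fin 2) (Fin 2) ℝ) (hA : A.IsHermitian) :
    A.det = hA.eigenvalues 0 * hA.eigenvalues 1 := by
  simpa [Fin.prod_univ_two] using hA.det_eq_prod_eigenvalues

lemma rho2_of_herm (A : Matrix (Fin 2) (Fin 2) ℝ) (hA : A.IsHermitian) :
    rho2 A = |hA.eigenvalues 0| + |hA.eigenvalues 1| := by
  rw [rho2, dif_pos hA]

lemma frob_sq (A : Matrix (Fin 2) (Fin 2) ℝ) (hA : A.IsHermitian) :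
    (frob A) ^ 2 = A.trace ^ 2 - 2 * A.det := by
  have hsym : A 1 0 = A 0 1 := by
    have := congrFun (congrFun hA 0) 1
    simpa [Matrix.conjTranspose_apply] using this
  have hnn : (0:ℝ) ≤ ∑ i, ∑ j, (A i j) ^ 2 :=
    Finset.sum_nonneg fun i _ => Finset.sum_nonneg fun j _ => sq_nonneg _
  rw [frob, Real.sq_sqrt hnn]
  simp [Fin.sum_univ_two, Matrix.det_fin_two, Matrix.trace_fin_two, hsym]
  ring

lemma frob_smul {n : ℕ} (τ : Matrix (Fin n) (Fin n) ℝ) (s : ℝ) (hs : 0 ≤ s) :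
    frob (s • τ) = s * frob τ := by
  rw [frob, frob]
  have : ∑ i, ∑ j, ((s • τ) i j) ^ 2 = s ^ 2 * ∑ i, ∑ j, (τ i j) ^ 2 := by
    simp [Finset.mul_sum, Matrix.smul_apply]; ring_nf
  rw [this, Real.sqrt_mul (sq_nonneg s), Real.sqrt_sq hs]

/-- pure algebra: `(|u|+|v|)² = (u+v)² − 2uv + 2|uv|`. -/
lemma abs_add_sq_eq (u v : ℝ) :
    (|u| + |v|) ^ 2 = (u + v) ^ 2 - 2 * (u * v) + 2 * |u * v| := by
  rcases abs_cases (u * v) with ⟨h, _⟩ | ⟨h, _⟩ <;>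
    rcases abs_cases u with ⟨h1, _⟩ | ⟨h1, _⟩ <;>
    rcases abs_cases v with ⟨h2, _⟩ | ⟨h2, _⟩ <;> nlinarith [abs_mul u v]

set_option maxHeartbeats 1600000 in
theorem hlam_smul_le_aux (lam : ℝ) (hlam_pos : 0 < lam) (τ : Matrix (Fin 2) (Fin 2) ℝ)
    (hτ : τ.IsHermitian) (s : ℝ) (hs0 : 0 < s) (hs1 : s ≤ 1) :
    hlam lam (s • τ) ≤ 2 * s * hlam lam τ := by
  have hτ' : (s • τ).IsHermitian := by
    unfold Matrix.IsHermitian at *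
    rw [Matrix.conjTranspose_smul, hτ]; simp
  set a := Real.sqrt lam with ha_def
  have ha : 0 < a := Real.sqrt_pos.mpr hlam_pos
  clear_value a
  set x := hτ.eigenvalues 0 with hx_def
  set y := hτ.eigenvalues 1 with hy_def
  set x' := hτ'.eigenvalues 0 with hx'_def
  set y' := hτ'.eigenvalues 1 with hy'_def
  -- basic identities
  have hr : rho2 τ = |x| + |y| := rho2_of_herm τ hτ
  have hd : |τ.det| = |x| * |y| := by rw [det_eq_eig τ hτ, abs_mul]
  have hF2 : (frob τ) ^ 2 = x ^ 2 + y ^ 2 := by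
    rw [frob_sq τ hτ, trace_eq_sum_eig τ hτ, det_eq_eig τ hτ]; ring
  have h1 : x' + y' = s * (x + y) := by
    rw [← trace_eq_sum_eig _ hτ', ← trace_eq_sum_eig _ hτ, Matrix.trace_smul, smul_eq_mul]
  have h2 : x' * y' = s ^ 2 * (x * y) := by
    rw [← det_eq_eig _ hτ', ← det_eq_eig _ hτ, Matrix.det_smul]
    norm_num
  have hr0' : rho2 (s • τ) = |x'| + |y'| := rho2_of_herm _ hτ'
  have hd0' : |(s • τ).det| = |x'| * |y'| := by rw [det_eq_eig _ hτ', abs_mul]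
  have hF0' : (frob (s • τ)) ^ 2 = s ^ 2 * (frob τ) ^ 2 := by
    rw [frob_smul τ s hs0.le]; ring
  set F := frob τ with hF_def
  have hFnn : 0 ≤ F := Real.sqrt_nonneg _
  clear_value x y x' y' F
  -- derive eigenvalue relations for s • τ
  have hr' : |x'| + |y'| = s * (|x| + |y|) := by
    have key : (|x'| + |y'|) ^ 2 = (s * (|x| + |y|)) ^ 2 := by
      rw [abs_add_sq_eq x' y', h1, h2]
      have e3 : |s ^ 2 * (x * y)| = s ^ 2 * |x * y| := by
        rw [abs_mul, abs_of_nonneg (sq_nonneg s)]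
      nlinarith [e3, abs_add_sq_eq x y]
    have hxy' : 0 ≤ |x'| + |y'| := by positivity
    have hsxy : 0 ≤ s * (|x| + |y|) := by positivity
    rw [← Real.sqrt_sq hxy', key, Real.sqrt_sq hsxy]
  have hd' : |x'| * |y'| = s ^ 2 * (|x| * |y|) := by
    have : |x' * y'| = |s ^ 2 * (x * y)| := by rw [h2]
    rw [abs_mul, abs_mul, abs_of_nonneg (sq_nonneg s), abs_mul] at this
    exact this
  clear hx_def hy_def hx'_def hy'_def h1 h2
  -- rewrite the goal into scalar form first
  set r : ℝ := |x| + |y| with hr_def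
  set m : ℝ := |x| * |y| with hm_def
  rw [hlam, hlam]
  rw [hr, hr0', hr', hF0', hd0', hd', hd, ← ha_def, ← hF_def]
  clear hr hd hr0' hd0' hF0' hτ hτ'
  clear hF_def ha_def hlam_pos τ
  -- now pure real arithmetic
  have hrnn : 0 ≤ r := by rw [hr_def]; positivity
  have hmnn : 0 ≤ m := by rw [hm_def]; positivity
  have hdF : 2 * m ≤ F ^ 2 := by
    rw [hF2, hm_def]; nlinarith [sq_nonneg (|x| - |y|), sq_abs x, sq_abs y]
  have hrF : r ^ 2 = F ^ 2 + 2 * m := by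
    rw [hF2, hr_def, hm_def, add_sq, sq_abs, sq_abs]; ring
  clear_value r m
  clear hr_def hm_def hF2 x y hd' hr' x' y'
  have hu : F ^ 2 / a * a = F ^ 2 := div_mul_cancel₀ _ ha.ne'
  have hw : m / a * a = m := div_mul_cancel₀ _ ha.ne'
  have hunn : 0 ≤ F ^ 2 / a := by positivity
  have hwnn : 0 ≤ m / a := by positivity
  set u := F ^ 2 / a with hu_def
  set w := m / a with hw_def
  have hmu : s ^ 2 * F ^ 2 / a = s ^ 2 * u := by rw [hu_def, mul_div_assoc]
  have hmw : s ^ 2 * m / a = s ^ 2 * w := by rw [hw_def, mul_div_assoc]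
  rw [hmu, hmw]
  clear_value u w
  clear hu_def hw_def hmu hmw
  -- r² ≤ 2 u a
  have h9 : r ^ 2 ≤ 2 * (u * a) := by rw [hu]; linarith
  by_cases hA : a ≤ s * r
  · have hA2 : a ≤ r := le_trans hA (by nlinarith [mul_le_mul_of_nonneg_right hs1 hrnn])
    rw [if_pos hA, if_pos hA2]
    have key : a * a ≤ 2 * s ^ 2 * (u * a) := by
      nlinarith [mul_self_le_mul_self ha.le hA, mul_le_mul_of_nonneg_left h9 (sq_nonneg s)]
    have h2 : s ^ 2 * u ≤ s * u := by nlinarith [mul_nonneg (mul_nonneg hs0.le (sub_nonneg.mpr hs1)) hunn]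
    rcases le_or_gt (2 * s) 1 with hc | hc
    · have h5 : a * a ≤ s * u * a := by
        nlinarith [key, mul_nonneg (mul_nonneg hs0.le hunn) ha.le]
      have hsu : a ≤ s * u := (mul_le_mul_iff_left₀ ha).mp h5
      have h0 : 0 ≤ 2 * (s * a) := by positivity
      nlinarith [h2, hsu, h0]
    · have h4 : a ≤ 2 * s * a := by nlinarith
      nlinarith [h2, h4, mul_nonneg hs0.le hunn]
  · rw [if_neg hA]
    push_neg at hA
    by_cases hB : a ≤ r
    · rw [if_pos hB]
      have key : r * a ≤ u * a + a * a := by nlinarith [sq_nonneg (r - a), hu, hdF, hrF]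
      have hru : r ≤ u + a := by
        have h1 : r * a ≤ (u + a) * a := by linarith [key]
        exact (mul_le_mul_iff_left₀ ha).mp h1
      have h6 : s * r ≤ s * (u + a) := mul_le_mul_of_nonneg_left hru hs0.le
      have h7 : 0 ≤ s ^ 2 * w := by positivity
      nlinarith [h6, h7]
    · rw [if_neg hB]
      push_neg at hB
      have hr4 : 4 * m ≤ r ^ 2 := by linarith
      have e1 : w * (2 - s) * a = m * (2 - s) := by rw [← hw]; ring
      have e2 : m * (2 - s) ≤ 2 * m := by nlinarith
      have e3 : 2 * m ≤ r * a := by nlinarith [hr4, mul_le_mul_of_nonneg_left hB.le hrnn]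
      have hwr : w * (2 - s) ≤ r := by
        have h1 : w * (2 - s) * a ≤ r * a := by rw [e1]; linarith
        exact (mul_le_mul_iff_left₀ ha).mp h1
      have h8 : 0 ≤ s * (r - w * (2 - s)) := mul_nonneg hs0.le (sub_nonneg.mpr hwr)
      nlinarith [h8]

/-- for every symmetric `2×2` matrix `τ`, every `λ > 0` and `s ∈ (0,1]`,
`h_λ(sτ) ≤ 2 s h_λ(τ)`. -/
theorem hlam_smul_le (lam : ℝ) (hlam_pos : 0 < lam) (τ : Matrix (Fin 2) (Fin 2) ℝ)
    (hτ : τ.IsHermitian) (s : ℝ) (hs0 : 0 < s) (hs1 : s ≤ 1) :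
    hlam lam (s • τ) ≤ 2 * s * hlam lam τ :=
  hlam_smul_le_aux lam hlam_pos τ hτ s hs0 hs1
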